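/- The (q,μ,ν)-deformed binomial weights sum to one: for |q|<1, 0 ≤ ν ≤ μ < 1, and any m ∈ ℕ, ∑_{j=0}^{m} φ_{q,μ,ν}(j|m) = 1, where φ_{q,μ,ν}(j|m) = μ^j (ν/μ;q)_j (μ;q)_{m-j} (q;q)_m / [(ν;q)_m (q;q)_j (q;q)_{m-j}]. -/
import Mathlib


noncomputable def qpR (a q : ℝ) (n : ℕ) : ℝ := ∏ i ∈ Finset.range n, (1 - a * q ^ i)

noncomputable def phi (q μ ν : ℝ) (j m : ℕ) : ℝ :=
  μ ^ j * qpR (ν / μ) q j * qpR μ q (m - j) * qpR q q m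
    / (qpR ν q m * qpR q q j * qpR q q (m - j))

lemma qpR_zero (a q : ℝ) : qpR a q 0 = 1 := by simp [qpR]

lemma qpR_succ (a q : ℝ) (n : ℕ) : qpR a q (n + 1) = qpR a q n * (1 - a * q ^ n) :=
  Finset.prod_range_succ _ _

lemma qpR_ne_zero {a q : ℝ} (ha : |a| < 1) (hq : |q| ≤ 1) (n : ℕ) : qpR a q n ≠ 0 := by
  induction n with
  | zero => simp [qpR]
  | succ n ih =>
    rw [qpR_succ]
    refine mul_ne_zero ih ?_
    have h1 : |a * q ^ n| < 1 := by
      rw [abs_mul, abs_pow]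
      calc |a| * |q| ^ n ≤ |a| * 1 := by
            refine mul_le_mul_of_nonneg_left ?_ (abs_nonneg a)
            exact pow_le_one₀ (abs_nonneg q) hq
        _ < 1 := by simpa using ha
    intro h
    have h2 : a * q ^ n = 1 := by linarith
    rw [h2] at h1
    norm_num at h1

/-- Gaussian binomial coefficients via Pascal recursion. -/
noncomputable def G (q : ℝ) : ℕ → ℕ → ℝ
  | 0, 0 => 1
  | 0, _ + 1 => 0
  | m + 1, 0 => G q m 0
  | m + 1, j + 1 => q ^ (j + 1) * G q m (j + 1) + G q m j

lemma G_zero_right (q : ℝ) (m : ℕ) : G q m 0 = 1 := by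
  induction m with
  | zero => rfl
  | succ m ih => rw [G, ih]

lemma G_eq_zero (q : ℝ) : ∀ m j : ℕ, m < j → G q m j = 0 := by
  intro m
  induction m with
  | zero => intro j hj; match j, hj with
    | j + 1, _ => rfl
  | succ m ih =>
    intro j hj
    match j, hj with
    | j + 1, hj =>
      rw [G, ih (j + 1) (by omega), ih j (by omega)]
      ring

lemma G_diag (q : ℝ) (m : ℕ) : G q m m = 1 := by
  induction m with
  | zero => rfl
  | succ m ih => rw [G, ih, G_eq_zero q m (m + 1) (by omega)]; ring

lemma G_pascal (q : ℝ) : ∀ m j : ℕ, G q (m + 1) (j + 1) = G q m (j + 1) + q ^ (m - j) * G q m j := by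
  intro m
  induction m with
  | zero =>
    intro j
    rcases j with _ | j
    · have d1 : G q (0 + 1) (0 + 1) = q ^ (0 + 1) * G q 0 (0 + 1) + G q 0 0 := rfl
      have z1 : G q 0 (0 + 1) = 0 := rfl
      have z2 : G q 0 0 = 1 := rfl
      rw [d1, z1, z2]
      norm_num
    · have z1 : G q 0 (j + 1 + 1) = 0 := G_eq_zero q 0 (j + 1 + 1) (by omega)
      have z2 : G q 0 (j + 1) = 0 := G_eq_zero q 0 (j + 1) (by omega)
      have d1 : G q (0 + 1) (j + 1 + 1) = q ^ (j + 1 + 1) * G q 0 (j + 1 + 1) + G q 0 (j + 1) := rfl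
      rw [d1, z1, z2]
      ring
  | succ m ih =>
    intro j
    rcases j with _ | j
    · have d1 : G q (m + 1 + 1) (0 + 1) = q ^ (0 + 1) * G q (m + 1) (0 + 1) + G q (m + 1) 0 := rfl
      have d2 : G q (m + 1) (0 + 1) = q ^ (0 + 1) * G q m (0 + 1) + G q m 0 := rfl
      have i0 := ih 0
      have L : G q (m + 1 + 1) (0 + 1)
          = q ^ (0 + 1) * (G q m (0 + 1) + q ^ (m - 0) * G q m 0) + G q (m + 1) 0 := by
        rw [d1, i0]
      rw [L, d2, G_zero_right, G_zero_right]
      simp only [Nat.sub_zero]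
      ring
    · have h1 : G q (m + 1 + 1) (j + 1 + 1)
          = q ^ (j + 1 + 1) * G q (m + 1) (j + 1 + 1) + G q (m + 1) (j + 1) := rfl
      have h2 : G q (m + 1) (j + 1 + 1) = q ^ (j + 1 + 1) * G q m (j + 1 + 1) + G q m (j + 1) := rfl
      have h3 : G q (m + 1) (j + 1) = q ^ (j + 1) * G q m (j + 1) + G q m j := rfl
      have i1 := ih (j + 1)
      have i2 := ih j
      have L : G q (m + 1 + 1) (j + 1 + 1)
          = q ^ (j + 1 + 1) * (G q m (j + 1 + 1) + q ^ (m - (j + 1)) * G q m (j + 1))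
            + (G q m (j + 1) + q ^ (m - j) * G q m j) := by
        rw [h1, i1, i2]
      rw [L, h2, h3]
      by_cases hjm : j + 1 ≤ m
      · have e1 : m - j = m - (j + 1) + 1 := by omega
        have e2 : m + 1 - (j + 1) = m - (j + 1) + 1 := by omega
        rw [e1, e2]
        ring
      · have z1 : G q m (j + 1) = 0 := G_eq_zero q m (j + 1) (by omega)
        have z2 : G q m (j + 1 + 1) = 0 := G_eq_zero q m (j + 1 + 1) (by omega)
        have e2 : m + 1 - (j + 1) = m - j := by omega
        rw [z1, z2, e2]
        ring

lemma G_mul (q : ℝ) : ∀ m j : ℕ, j ≤ m →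
    G q m j * qpR q q j * qpR q q (m - j) = qpR q q m := by
  intro m
  induction m with
  | zero =>
    intro j hj
    interval_cases j
    simp [G_zero_right, qpR_zero]
  | succ m ih =>
    intro j hj
    rcases j with _ | k
    · rw [G_zero_right]
      simp [qpR_zero]
    · have h3 : G q (m + 1) (k + 1) = q ^ (k + 1) * G q m (k + 1) + G q m k := rfl
      rw [h3]
      by_cases hk : k + 1 ≤ m
      · have ih1 := ih (k + 1) hk
        have ih2 := ih k (by omega)
        have e1 : m + 1 - (k + 1) = m - (k + 1) + 1 := by omega
        have e2 : m - k = m - (k + 1) + 1 := by omega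
        rw [e2, qpR_succ] at ih2
        rw [qpR_succ q q k] at ih1 ⊢
        rw [e1, qpR_succ]
        rw [show (m : ℕ) + 1 = m + 1 from rfl, qpR_succ q q m]
        have hp : q ^ (k + 1) * q ^ (m - (k + 1)) = q ^ m := by
          rw [← pow_add]; congr 1; omega
        linear_combination (q * q ^ k * (1 - q * q ^ (m - (k + 1)))) * ih1
          + (1 - q * q ^ k) * ih2 - (qpR q q m * q) * hp
      · have hkm : k = m := by omega
        subst hkm
        rw [G_eq_zero q k (k + 1) (by omega), G_diag]
        simp only [Nat.sub_self, qpR_zero]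
        ring
    
lemma key (a b q : ℝ) (m : ℕ) :
    ∑ j ∈ Finset.range (m + 1), G q m j * b ^ j * qpR a q j * qpR b q (m - j)
      = qpR (a * b) q m := by
  induction m with
  | zero => simp [G_zero_right, qpR_zero]
  | succ m ih =>
    have step : ∑ j ∈ Finset.range (m + 2), G q (m + 1) j * b ^ j * qpR a q j * qpR b q (m + 1 - j)
        = (1 - a * b * q ^ m) *
          ∑ j ∈ Finset.range (m + 1), G q m j * b ^ j * qpR a q j * qpR b q (m - j) := by
      rw [Finset.sum_range_succ']
      have hsplit : ∀ j ∈ Finset.range (m + 1),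
          G q (m + 1) (j + 1) * b ^ (j + 1) * qpR a q (j + 1) * qpR b q (m + 1 - (j + 1))
          = (G q m (j + 1) * b ^ (j + 1) * qpR a q (j + 1) * qpR b q (m + 1 - (j + 1)))
            + (G q m j * b ^ j * qpR a q j * qpR b q (m - j))
              * (b * q ^ (m - j) * (1 - a * q ^ j)) := by
        intro j hj
        rw [Finset.mem_range] at hj
        have e1 : m + 1 - (j + 1) = m - j := by omega
        rw [G_pascal, e1, qpR_succ a q j]
        ring
      rw [Finset.sum_congr rfl hsplit, Finset.sum_add_distrib]
      have h0 : G q (m + 1) 0 * b ^ 0 * qpR a q 0 * qpR b q (m + 1 - 0)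
          = G q m 0 * b ^ 0 * qpR a q 0 * qpR b q (m + 1 - 0) := by
        rw [G_zero_right, G_zero_right]
      rw [h0]
      rw [add_right_comm, ← Finset.sum_range_succ'
        (fun j => G q m j * b ^ j * qpR a q j * qpR b q (m + 1 - j)) (m + 1)]
      rw [Finset.sum_range_succ, G_eq_zero q m (m + 1) (by omega)]
      simp only [zero_mul, mul_zero, add_zero]
      rw [Finset.mul_sum, ← Finset.sum_add_distrib]
      refine Finset.sum_congr rfl ?_
      intro j hj
      rw [Finset.mem_range] at hj
      have e2 : m + 1 - j = (m - j) + 1 := by omega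
      rw [e2, qpR_succ]
      have e3 : q ^ (m - j) * q ^ j = q ^ m := by rw [← pow_add]; congr 1; omega
      linear_combination (-(a * b * G q m j * b ^ j * qpR a q j * qpR b q (m - j))) * e3
    rw [step, ih, qpR_succ]
    ring

theorem stmt5 (q μ ν : ℝ) (hq : |q| < 1) (hν : 0 ≤ ν) (hνμ : ν ≤ μ)
    (hμ0 : 0 < μ) (hμ : μ < 1) (m : ℕ) :
    ∑ j ∈ Finset.range (m + 1), phi q μ ν j m = 1 := by
  have hq1 : |q| ≤ 1 := le_of_lt hq
  have hqn : ∀ n, qpR q q n ≠ 0 := fun n => qpR_ne_zero hq hq1 n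
  have hνabs : |ν| < 1 := by rw [abs_of_nonneg hν]; linarith
  have hνn : qpR ν q m ≠ 0 := qpR_ne_zero hνabs hq1 m
  have hμne : μ ≠ 0 := ne_of_gt hμ0
  have hab : ν / μ * μ = ν := div_mul_cancel₀ ν hμne
  have hkey := key (ν / μ) μ q m
  rw [hab] at hkey
  have hphi : ∀ j ∈ Finset.range (m + 1),
      phi q μ ν j m = G q m j * μ ^ j * qpR (ν / μ) q j * qpR μ q (m - j) / qpR ν q m := by
    intro j hj
    rw [Finset.mem_range] at hj
    have hGm := G_mul q m j (by omega)
    have h1 := hqn j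
    have h2 := hqn (m - j)
    unfold phi
    rw [← hGm]
    rw [div_eq_div_iff (mul_ne_zero (mul_ne_zero hνn h1) h2) hνn]
    ring
  rw [Finset.sum_congr rfl hphi, ← Finset.sum_div]
  have hs : ∑ j ∈ Finset.range (m + 1), G q m j * μ ^ j * qpR (ν / μ) q j * qpR μ q (m - j)
      = qpR ν q m := by
    rw [← hkey]
  rw [hs, div_self hνn]
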